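/- For every natural number n, the k-Mersenne number satisfies the Binet formula M_{k,n} = (λ₁ⁿ − λ₂ⁿ)/(λ₁ − λ₂), where λ₁, λ₂ are the two roots of λ² − 3kλ + 2 = 0. -/

import Mathlib

noncomputable def M (k : ℝ) : ℕ → ℝ
  | 0 => 0
  | 1 => 1
  | (n+2) => 3*k * M k (n+1) - 2 * M k n

theorem kMersenne_binet (k : ℝ) (hk : 9*k^2 > 8)
    (lam1 lam2 : ℝ)
    (h1 : lam1 = (3*k + Real.sqrt (9*k^2 - 8))/2)
    (h2 : lam2 = (3*k - Real.sqrt (9*k^2 - 8))/2) :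
    ∀ n : ℕ, M k n = (lam1^n - lam2^n)/(lam1 - lam2) := by
  have hs : Real.sqrt (9*k^2 - 8) > 0 := Real.sqrt_pos.mpr (by linarith)
  have hsq : Real.sqrt (9*k^2 - 8) ^ 2 = 9*k^2 - 8 :=
    Real.sq_sqrt (by linarith)
  have hdiff : lam1 - lam2 = Real.sqrt (9*k^2 - 8) := by rw [h1, h2]; ring
  have hne : lam1 - lam2 ≠ 0 := by rw [hdiff]; exact ne_of_gt hs
  have hsum : lam1 + lam2 = 3*k := by rw [h1, h2]; ring
  have hprod : lam1 * lam2 = 2 := by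
    rw [h1, h2]; nlinarith [hsq]
  intro n
  induction n using Nat.strong_induction_on with
  | _ n ih =>
    match n with
    | 0 => simp [M]
    | 1 => simp [M]; field_simp
    | (m+2) =>
      have h0 := ih m (by omega)
      have h1' := ih (m+1) (by omega)
      show 3*k * M k (m+1) - 2 * M k m = _
      rw [h0, h1', ← hsum, ← hprod]
      field_simp
      ring
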